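/- Minty's trick: Let X be a real Banach space and A : X → X' be a monotone hemicontinuous operator, and let F ∈ X'. If u ∈ X satisfies ⟨A(v) − F, v − u⟩ ≥ 0 for all v ∈ X, then A(u) = F. -/
import Mathlib


/-- Minty's trick: if `A : X → X'` is monotone and hemicontinuous on a real Banach space `X`,
`F ∈ X'` and `⟨A(v) − F, v − u⟩ ≥ 0` for all `v`, then `A(u) = F`. -/
theorem minty_trick {X : Type*} [NormedAddCommGroup X] [NormedSpace ℝ X] [CompleteSpace X]
    (A : X → (X →L[ℝ] ℝ)) (F : X →L[ℝ] ℝ)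
    (hmono : ∀ x y : X, 0 ≤ (A x - A y) (x - y))
    (hhemi : ∀ u w v : X, Continuous fun lam : ℝ => (A (u + lam • w)) v)
    (u : X) (hu : ∀ v : X, 0 ≤ (A v - F) (v - u)) :
    A u = F := by
  have key : ∀ w : X, 0 ≤ (A u - F) w := by
    intro w
    have hpos : ∀ t : ℝ, 0 < t → 0 ≤ (A (u + t • w)) w - F w := by
      intro t ht
      have h := hu (u + t • w)
      have he : u + t • w - u = t • w := by abel
      rw [he] at h
      simp only [ContinuousLinearMap.sub_apply, map_smul, smul_eq_mul] at h
      nlinarith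
    have hcont : Continuous fun t : ℝ => (A (u + t • w)) w - F w :=
      (hhemi u w w).sub continuous_const
    have htend : Filter.Tendsto (fun t : ℝ => (A (u + t • w)) w - F w)
        (nhdsWithin 0 (Set.Ioi 0)) (nhds ((A u) w - F w)) := by
      have := hcont.tendsto 0
      simpa using this.mono_left nhdsWithin_le_nhds
    have hle : 0 ≤ (A u) w - F w := by
      refine ge_of_tendsto htend ?_
      filter_upwards [self_mem_nhdsWithin] with t ht
      exact hpos t ht
    simpa using hle
  ext w
  have h1 := key w
  have h2 := key (-w)
  simp only [ContinuousLinearMap.sub_apply, map_neg] at h1 h2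
  linarith
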